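/- There exist a sequence A(t) = [a_ij(t)], t ≥ 1, of 3×3 row-stochastic matrices with strictly positive diagonal entries, satisfying the cut-balance condition with constant K = 2 (i.e., for every t ≥ 1 and every nonempty proper subset S of {1,2,3}, ∑_{i∉S, j∈S} a_ij(t) ≤ 2 ∑_{i∈S, j∉S} a_ij(t)), whose persistent graph (arcs (j,i) with ∑_{t=1}^∞ a_ij(t) = ∞) is strongly connected, and which has the absolute infinite flow property, together with an initial state x(1) ∈ ℝ³, such that the system x(t+1) = A(t) x(t) fails to reach consensus: lim_{t→∞} Ψ(t) > 0, where Ψ(t) = max_i x_i(t) − min_i x_i(t). In particular, the conclusions of consensus results requiring a uniform positive lower bound η on the diagonal entries a_ii(t) can fail when no such uniform lower bound exists. -/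

import Mathlib

open Filter Finset

/- ===================== Auxiliary definitions ===================== -/

noncomputable def stmtTh (t : ℕ) : ℝ := (1/2)^(t+3)

noncomputable def stmtJ21 (d : ℝ) : Matrix (Fin 3) (Fin 3) ℝ := !![1/2, 1/2, 0; 1-d, d, 0; 0, 0, 1]
noncomputable def stmtJ13 (d : ℝ) : Matrix (Fin 3) (Fin 3) ℝ := !![d, 0, 1-d; 0, 1, 0; 1/2, 0, 1/2]
noncomputable def stmtJ32 (d : ℝ) : Matrix (Fin 3) (Fin 3) ℝ := !![1, 0, 0; 0, 1/2, 1/2; 0, 1-d, d]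

noncomputable def stmtA (t : ℕ) : Matrix (Fin 3) (Fin 3) ℝ :=
  if t = 0 then 1 else
  if t % 3 = 1 then stmtJ21 (stmtTh t) else
  if t % 3 = 2 then stmtJ13 (stmtTh t) else stmtJ32 (stmtTh t)

noncomputable def stmtX : ℕ → Fin 3 → ℝ
  | 0 => ![0, 1/2, 1]
  | t+1 => (stmtA t).mulVec (stmtX t)

/- ===================== Finset (Fin 3) enumeration ===================== -/

lemma stmt_finset_cases (S : Finset (Fin 3)) (h1 : S.Nonempty) (h2 : S ≠ univ) :
    S = {0} ∨ S = {1} ∨ S = {2} ∨ S = {0,1} ∨ S = {0,2} ∨ S = {1,2} := by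
  have h := h1.ne_empty
  have key : ∀ T : Finset (Fin 3), T ≠ ∅ → T ≠ univ →
      (T = {0} ∨ T = {1} ∨ T = {2} ∨ T = {0,1} ∨ T = {0,2} ∨ T = {1,2}) := by decide
  exact key S h h2

lemma stmt_compl0 : ({0} : Finset (Fin 3))ᶜ = {1,2} := by decide
lemma stmt_compl1 : ({1} : Finset (Fin 3))ᶜ = {0,2} := by decide
lemma stmt_compl2 : ({2} : Finset (Fin 3))ᶜ = {0,1} := by decide
lemma stmt_compl01 : ({0,1} : Finset (Fin 3))ᶜ = {2} := by decide
lemma stmt_compl02 : ({0,2} : Finset (Fin 3))ᶜ = {1} := by decide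
lemma stmt_compl12 : ({1,2} : Finset (Fin 3))ᶜ = {0} := by decide

lemma stmt_sum_s0 (f : Fin 3 → ℝ) : ∑ i ∈ ({0} : Finset (Fin 3)), f i = f 0 := Finset.sum_singleton _ _
lemma stmt_sum_s1 (f : Fin 3 → ℝ) : ∑ i ∈ ({1} : Finset (Fin 3)), f i = f 1 := Finset.sum_singleton _ _
lemma stmt_sum_s2 (f : Fin 3 → ℝ) : ∑ i ∈ ({2} : Finset (Fin 3)), f i = f 2 := Finset.sum_singleton _ _
lemma stmt_sum_s01 (f : Fin 3 → ℝ) : ∑ i ∈ ({0,1} : Finset (Fin 3)), f i = f 0 + f 1 := by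
  rw [Finset.sum_insert (by decide), Finset.sum_singleton]
lemma stmt_sum_s02 (f : Fin 3 → ℝ) : ∑ i ∈ ({0,2} : Finset (Fin 3)), f i = f 0 + f 2 := by
  rw [Finset.sum_insert (by decide), Finset.sum_singleton]
lemma stmt_sum_s12 (f : Fin 3 → ℝ) : ∑ i ∈ ({1,2} : Finset (Fin 3)), f i = f 1 + f 2 := by
  rw [Finset.sum_insert (by decide), Finset.sum_singleton]

/- ===================== Dichotomy lemmas ===================== -/

lemma stmt_dich21 (d : ℝ) (hd1 : 0 < d) (hd2 : d ≤ 1/8) (S T : Finset (Fin 3))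
    (hS1 : S.Nonempty) (hS2 : S ≠ univ) (hT1 : T.Nonempty) (hT2 : T ≠ univ) :
    (T = S ∧ (S = {2} ∨ S = {0,1})) ∨
      1/4 ≤ (∑ i ∈ Tᶜ, ∑ j ∈ S, stmtJ21 d i j) + ∑ i ∈ T, ∑ j ∈ Sᶜ, stmtJ21 d i j := by
  rcases stmt_finset_cases S hS1 hS2 with rfl | rfl | rfl | rfl | rfl | rfl <;>
    rcases stmt_finset_cases T hT1 hT2 with rfl | rfl | rfl | rfl | rfl | rfl <;>
    first
      | (left; exact ⟨rfl, by decide⟩)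
      | (right
         simp only [stmt_compl0, stmt_compl1, stmt_compl2, stmt_compl01, stmt_compl02,
           stmt_compl12, stmt_sum_s0, stmt_sum_s1, stmt_sum_s2, stmt_sum_s01, stmt_sum_s02,
           stmt_sum_s12]
         norm_num [stmtJ21, Matrix.vecHead, Matrix.vecTail, Matrix.cons_val_two]
         try linarith)

lemma stmt_dich13 (d : ℝ) (hd1 : 0 < d) (hd2 : d ≤ 1/8) (S T : Finset (Fin 3))
    (hS1 : S.Nonempty) (hS2 : S ≠ univ) (hT1 : T.Nonempty) (hT2 : T ≠ univ) :
    (T = S ∧ (S = {1} ∨ S = {0,2})) ∨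
      1/4 ≤ (∑ i ∈ Tᶜ, ∑ j ∈ S, stmtJ13 d i j) + ∑ i ∈ T, ∑ j ∈ Sᶜ, stmtJ13 d i j := by
  rcases stmt_finset_cases S hS1 hS2 with rfl | rfl | rfl | rfl | rfl | rfl <;>
    rcases stmt_finset_cases T hT1 hT2 with rfl | rfl | rfl | rfl | rfl | rfl <;>
    first
      | (left; exact ⟨rfl, by decide⟩)
      | (right
         simp only [stmt_compl0, stmt_compl1, stmt_compl2, stmt_compl01, stmt_compl02,
           stmt_compl12, stmt_sum_s0, stmt_sum_s1, stmt_sum_s2, stmt_sum_s01, stmt_sum_s02,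
           stmt_sum_s12]
         norm_num [stmtJ13, Matrix.vecHead, Matrix.vecTail, Matrix.cons_val_two]
         try linarith)

/- ===================== basic matrix properties ===================== -/

lemma stmtTh_pos (t : ℕ) : 0 < stmtTh t := by unfold stmtTh; positivity

lemma stmtTh_le (t : ℕ) : stmtTh t ≤ 1/8 := by
  have h1 : stmtTh t ≤ (1/2 : ℝ)^3 := by
    unfold stmtTh
    apply pow_le_pow_of_le_one (by norm_num) (by norm_num) (by omega)
  norm_num at h1 ⊢
  linarith

lemma stmtA_nonneg : ∀ t i j, 0 ≤ stmtA t i j := by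
  intro t i j
  have h8 := stmtTh_le t
  have h0 := stmtTh_pos t
  unfold stmtA
  split
  · rw [Matrix.one_apply]; split <;> norm_num
  · split
    · fin_cases i <;> fin_cases j <;>
        norm_num [stmtJ21, Matrix.vecHead, Matrix.vecTail] <;> linarith
    · split
      · fin_cases i <;> fin_cases j <;>
          norm_num [stmtJ13, Matrix.vecHead, Matrix.vecTail] <;> linarith
      · fin_cases i <;> fin_cases j <;>
          norm_num [stmtJ32, Matrix.vecHead, Matrix.vecTail] <;> linarith

lemma stmtA_rowsum : ∀ t i, ∑ j, stmtA t i j = 1 := by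
  intro t i
  unfold stmtA
  split
  · simp [Matrix.one_apply]
  · split
    · fin_cases i <;>
        (simp [stmtJ21, Fin.sum_univ_three, Matrix.vecHead, Matrix.vecTail]; try ring)
    · split
      · fin_cases i <;>
          (simp [stmtJ13, Fin.sum_univ_three, Matrix.vecHead, Matrix.vecTail]; try ring)
      · fin_cases i <;>
          (simp [stmtJ32, Fin.sum_univ_three, Matrix.vecHead, Matrix.vecTail]; try ring)

lemma stmtA_diag (t : ℕ) (ht : 1 ≤ t) (i : Fin 3) : 0 < stmtA t i i := by
  have h8 := stmtTh_le t
  have h0 := stmtTh_pos t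
  unfold stmtA
  rw [if_neg (by omega)]
  split
  · fin_cases i <;> norm_num [stmtJ21, Matrix.vecHead, Matrix.vecTail] <;> linarith
  · split
    · fin_cases i <;> norm_num [stmtJ13, Matrix.vecHead, Matrix.vecTail] <;> linarith
    · fin_cases i <;> norm_num [stmtJ32, Matrix.vecHead, Matrix.vecTail] <;> linarith

/- ===================== cut balance ===================== -/

lemma stmt_cb (t : ℕ) (ht : 1 ≤ t) (S : Finset (Fin 3)) (hS1 : S.Nonempty) (hS2 : S ≠ univ) :
    ∑ i ∈ Sᶜ, ∑ j ∈ S, stmtA t i j ≤ 2 * ∑ i ∈ S, ∑ j ∈ Sᶜ, stmtA t i j := by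
  have h8 := stmtTh_le t
  have h0 := stmtTh_pos t
  unfold stmtA
  rw [if_neg (by omega)]
  split
  · rcases stmt_finset_cases S hS1 hS2 with rfl | rfl | rfl | rfl | rfl | rfl <;>
      (simp only [stmt_compl0, stmt_compl1, stmt_compl2, stmt_compl01, stmt_compl02,
         stmt_compl12, stmt_sum_s0, stmt_sum_s1, stmt_sum_s2, stmt_sum_s01, stmt_sum_s02,
         stmt_sum_s12]
       norm_num [stmtJ21, Matrix.vecHead, Matrix.vecTail, Matrix.cons_val_two]
       try linarith)
  · split
    · rcases stmt_finset_cases S hS1 hS2 with rfl | rfl | rfl | rfl | rfl | rfl <;>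
        (simp only [stmt_compl0, stmt_compl1, stmt_compl2, stmt_compl01, stmt_compl02,
           stmt_compl12, stmt_sum_s0, stmt_sum_s1, stmt_sum_s2, stmt_sum_s01, stmt_sum_s02,
           stmt_sum_s12]
         norm_num [stmtJ13, Matrix.vecHead, Matrix.vecTail, Matrix.cons_val_two]
         try linarith)
    · rcases stmt_finset_cases S hS1 hS2 with rfl | rfl | rfl | rfl | rfl | rfl <;>
        (simp only [stmt_compl0, stmt_compl1, stmt_compl2, stmt_compl01, stmt_compl02,
           stmt_compl12, stmt_sum_s0, stmt_sum_s1, stmt_sum_s2, stmt_sum_s01, stmt_sum_s02,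
           stmt_sum_s12]
         norm_num [stmtJ32, Matrix.vecHead, Matrix.vecTail, Matrix.cons_val_two]
         try linarith)

/- ===================== divergence machinery ===================== -/

lemma stmt_sum_Icc_succ (w : ℕ → ℝ) (n : ℕ) :
    ∑ t ∈ Icc 1 (n+1), w t = (∑ t ∈ Icc 1 n, w t) + w (n+1) := by
  rw [← Finset.sum_Icc_succ_top (by omega : 1 ≤ n + 1)]

lemma stmt_triple_sum (w : ℕ → ℝ) :
    ∀ m, ∑ t ∈ Icc 1 (3*m+3), w t
      = ∑ k ∈ range (m+1), (w (3*k+1) + w (3*k+2) + w (3*k+3)) := by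
  intro m
  induction m with
  | zero =>
      show ∑ t ∈ Icc 1 3, w t = _
      rw [show (3:ℕ) = 2 + 1 from rfl, stmt_sum_Icc_succ,
        show (2:ℕ) = 1 + 1 from rfl, stmt_sum_Icc_succ, Finset.Icc_self,
        Finset.sum_singleton, Finset.sum_range_succ, Finset.sum_range_zero]
      norm_num
  | succ m ih =>
      have e : 3*(m+1)+3 = (3*m+3)+1+1+1 := by ring
      rw [e, stmt_sum_Icc_succ, stmt_sum_Icc_succ, stmt_sum_Icc_succ, ih,
        Finset.sum_range_succ]
      have e1 : 3*m+3+1 = 3*(m+1)+1 := by ring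
      have e2 : 3*m+3+1+1 = 3*(m+1)+2 := by ring
      have e3 : 3*m+3+1+1+1 = 3*(m+1)+3 := by ring
      rw [e3, e2, e1]
      simp [Finset.sum_range_succ]
      ring

lemma stmt_diverge (w : ℕ → ℝ) (h0 : ∀ t, 1 ≤ t → 0 ≤ w t)
    (hlb : ∀ k, 1/4 ≤ w (3*k+1) + w (3*k+2) + w (3*k+3)) :
    Tendsto (fun n => ∑ t ∈ Icc 1 n, w t) atTop atTop := by
  have mono : Monotone (fun n => ∑ t ∈ Icc 1 n, w t) := by
    intro a b hab
    apply Finset.sum_le_sum_of_subset_of_nonneg (Finset.Icc_subset_Icc_right hab)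
    intro t ht _
    exact h0 t (Finset.mem_Icc.1 ht).1
  rw [tendsto_atTop]
  intro b
  obtain ⟨m, hm⟩ := exists_nat_ge (4*b)
  refine eventually_atTop.2 ⟨3*m+3, fun n hn => ?_⟩
  have h1 : b ≤ ∑ t ∈ Icc 1 (3*m+3), w t := by
    rw [stmt_triple_sum w m]
    have h2 : ((m:ℝ)+1)/4 ≤ ∑ k ∈ range (m+1), (w (3*k+1) + w (3*k+2) + w (3*k+3)) := by
      calc ((m:ℝ)+1)/4 = ∑ _k ∈ range (m+1), (1/4 : ℝ) := by
            rw [Finset.sum_const, Finset.card_range]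
            push_cast
            ring
        _ ≤ _ := Finset.sum_le_sum fun k _ => hlb k
    linarith
  exact h1.trans (mono hn)

/- ===================== trajectory invariant ===================== -/

lemma stmtA_eq21 (t : ℕ) (ht : 1 ≤ t) (h : t % 3 = 1) : stmtA t = stmtJ21 (stmtTh t) := by
  unfold stmtA
  rw [if_neg (by omega), if_pos h]

lemma stmtA_eq13 (t : ℕ) (ht : 1 ≤ t) (h : t % 3 = 2) : stmtA t = stmtJ13 (stmtTh t) := by
  unfold stmtA
  rw [if_neg (by omega), if_neg (by omega), if_pos h]

lemma stmtA_eq32 (t : ℕ) (ht : 1 ≤ t) (h : t % 3 = 0) : stmtA t = stmtJ32 (stmtTh t) := by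
  unfold stmtA
  rw [if_neg (by omega), if_neg (by omega), if_neg (by omega)]

lemma stmtJ21_mulVec (d : ℝ) (v : Fin 3 → ℝ) :
    (stmtJ21 d).mulVec v 0 = 1/2 * v 0 + 1/2 * v 1
    ∧ (stmtJ21 d).mulVec v 1 = (1-d) * v 0 + d * v 1
    ∧ (stmtJ21 d).mulVec v 2 = v 2 := by
  refine ⟨?_, ?_, ?_⟩ <;>
    (simp [Matrix.mulVec, dotProduct, Fin.sum_univ_three, stmtJ21,
       Matrix.vecHead, Matrix.vecTail]
     try ring)

lemma stmtJ13_mulVec (d : ℝ) (v : Fin 3 → ℝ) :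
    (stmtJ13 d).mulVec v 0 = d * v 0 + (1-d) * v 2
    ∧ (stmtJ13 d).mulVec v 1 = v 1
    ∧ (stmtJ13 d).mulVec v 2 = 1/2 * v 0 + 1/2 * v 2 := by
  refine ⟨?_, ?_, ?_⟩ <;>
    (simp [Matrix.mulVec, dotProduct, Fin.sum_univ_three, stmtJ13,
       Matrix.vecHead, Matrix.vecTail]
     try ring)

lemma stmtJ32_mulVec (d : ℝ) (v : Fin 3 → ℝ) :
    (stmtJ32 d).mulVec v 0 = v 0
    ∧ (stmtJ32 d).mulVec v 1 = 1/2 * v 1 + 1/2 * v 2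
    ∧ (stmtJ32 d).mulVec v 2 = (1-d) * v 1 + d * v 2 := by
  refine ⟨?_, ?_, ?_⟩ <;>
    (simp [Matrix.mulVec, dotProduct, Fin.sum_univ_three, stmtJ32,
       Matrix.vecHead, Matrix.vecTail]
     try ring)

noncomputable def stmtL (t : ℕ) : Fin 3 :=
  if t % 6 = 2 ∨ t % 6 = 3 then 1 else if t % 6 = 4 ∨ t % 6 = 5 then 2 else 0

noncomputable def stmtH (t : ℕ) : Fin 3 :=
  if t % 6 = 1 ∨ t % 6 = 2 then 2 else if t % 6 = 3 ∨ t % 6 = 4 then 0 else 1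

noncomputable def stmtC (t : ℕ) : ℝ := 1/8 - (1/2)^(t+2)

lemma stmtC_nonneg (t : ℕ) (ht : 1 ≤ t) : 0 ≤ stmtC t := by
  have h1 : (1/2 : ℝ)^(t+2) ≤ (1/2)^3 :=
    pow_le_pow_of_le_one (by norm_num) (by norm_num) (by omega)
  unfold stmtC
  norm_num at h1 ⊢
  linarith

lemma stmtC_le (t : ℕ) : stmtC t ≤ 1/8 := by
  have : (0:ℝ) < (1/2)^(t+2) := by positivity
  unfold stmtC
  linarith

lemma stmtC_succ (t : ℕ) : stmtC (t+1) = stmtC t + stmtTh t := by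
  unfold stmtC stmtTh
  have h : (1/2 : ℝ)^(t+3) = (1/2)^(t+2) * (1/2) := pow_succ _ _
  rw [show t+1+2 = t+3 from rfl]
  linarith

lemma stmt_step_low (θ c c' a b : ℝ) (hθ0 : 0 ≤ θ) (hθ1 : θ ≤ 1) (hc0 : 0 ≤ c)
    (hrel : c + θ ≤ c') (ha : a ≤ c) (hb : b ≤ 1) : (1-θ)*a + θ*b ≤ c' := by
  nlinarith

lemma stmt_step_high (θ c c' a b : ℝ) (hθ0 : 0 ≤ θ) (hθ1 : θ ≤ 1) (hc0 : 0 ≤ c) (hc1 : c ≤ 1)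
    (hrel : c + θ ≤ c') (ha : 1 - c ≤ a) (hb : 0 ≤ b) : 1 - c' ≤ (1-θ)*a + θ*b := by
  nlinarith

lemma stmt_box (t : ℕ) (hv : ∀ i, 0 ≤ stmtX t i ∧ stmtX t i ≤ 1) :
    ∀ i, 0 ≤ stmtX (t+1) i ∧ stmtX (t+1) i ≤ 1 := by
  intro i
  show 0 ≤ (stmtA t).mulVec (stmtX t) i ∧ (stmtA t).mulVec (stmtX t) i ≤ 1
  have hrep : (stmtA t).mulVec (stmtX t) i = ∑ j, stmtA t i j * stmtX t j := by
    simp [Matrix.mulVec, dotProduct]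
  rw [hrep]
  constructor
  · exact Finset.sum_nonneg fun j _ => mul_nonneg (stmtA_nonneg t i j) (hv j).1
  · calc ∑ j, stmtA t i j * stmtX t j
        ≤ ∑ j, stmtA t i j := Finset.sum_le_sum fun j _ =>
          mul_le_of_le_one_right (stmtA_nonneg t i j) (hv j).2
      _ = 1 := stmtA_rowsum t i

lemma stmt_inv : ∀ t, 1 ≤ t →
    (∀ i, 0 ≤ stmtX t i ∧ stmtX t i ≤ 1)
    ∧ stmtX t (stmtL t) ≤ stmtC t ∧ 1 - stmtC t ≤ stmtX t (stmtH t) := by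
  intro t
  induction t with
  | zero => omega
  | succ t ih =>
    intro _
    by_cases ht : 1 ≤ t
    · obtain ⟨hbox, hlo, hhi⟩ := ih ht
      have hbox' := stmt_box t hbox
      have hθ0 := (stmtTh_pos t).le
      have hθ1 : stmtTh t ≤ 1 := le_trans (stmtTh_le t) (by norm_num)
      have hc0 := stmtC_nonneg t ht
      have hc1 : stmtC t ≤ 1 := le_trans (stmtC_le t) (by norm_num)
      have hrel : stmtC t + stmtTh t ≤ stmtC (t+1) := le_of_eq (stmtC_succ t).symm
      have hCmono : stmtC t ≤ stmtC (t+1) := by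
        rw [stmtC_succ t]; linarith
      refine ⟨hbox', ?_, ?_⟩
      all_goals {
        have h6 : t % 6 = 0 ∨ t % 6 = 1 ∨ t % 6 = 2 ∨ t % 6 = 3 ∨ t % 6 = 4 ∨ t % 6 = 5 := by
          omega
        rcases h6 with h6 | h6 | h6 | h6 | h6 | h6
        -- case t%6 = 0 : J32, L 0→0, H 1→2
        · have hA := stmtA_eq32 t ht (by omega)
          have hmv := stmtJ32_mulVec (stmtTh t) (stmtX t)
          rw [← hA] at hmv
          have hL : stmtL t = 0 := by simp [stmtL, h6]
          have hH : stmtH t = 1 := by simp [stmtH, h6]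
          have hL' : stmtL (t+1) = 0 := by simp [stmtL, show (t+1) % 6 = 1 from by omega]
          have hH' : stmtH (t+1) = 2 := by simp [stmtH, show (t+1) % 6 = 1 from by omega]
          rw [hL] at hlo; rw [hH] at hhi
          first
          | (rw [hL']
             show (stmtA t).mulVec (stmtX t) 0 ≤ stmtC (t+1)
             rw [hmv.1]; linarith)
          | (rw [hH']
             show 1 - stmtC (t+1) ≤ (stmtA t).mulVec (stmtX t) 2
             rw [hmv.2.2]
             exact stmt_step_high _ _ _ _ _ hθ0 hθ1 hc0 hc1 hrel hhi (hbox 2).1)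
        -- case t%6 = 1 : J21, L 0→1, H 2→2
        · have hA := stmtA_eq21 t ht (by omega)
          have hmv := stmtJ21_mulVec (stmtTh t) (stmtX t)
          rw [← hA] at hmv
          have hL : stmtL t = 0 := by simp [stmtL, h6]
          have hH : stmtH t = 2 := by simp [stmtH, h6]
          have hL' : stmtL (t+1) = 1 := by simp [stmtL, show (t+1) % 6 = 2 from by omega]
          have hH' : stmtH (t+1) = 2 := by simp [stmtH, show (t+1) % 6 = 2 from by omega]
          rw [hL] at hlo; rw [hH] at hhi
          first
          | (rw [hL']
             show (stmtA t).mulVec (stmtX t) 1 ≤ stmtC (t+1)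
             rw [hmv.2.1]
             exact stmt_step_low _ _ _ _ _ hθ0 hθ1 hc0 hrel hlo (hbox 1).2)
          | (rw [hH']
             show 1 - stmtC (t+1) ≤ (stmtA t).mulVec (stmtX t) 2
             rw [hmv.2.2]; linarith)
        -- case t%6 = 2 : J13, L 1→1, H 2→0
        · have hA := stmtA_eq13 t ht (by omega)
          have hmv := stmtJ13_mulVec (stmtTh t) (stmtX t)
          rw [← hA] at hmv
          have hL : stmtL t = 1 := by simp [stmtL, h6]
          have hH : stmtH t = 2 := by simp [stmtH, h6]
          have hL' : stmtL (t+1) = 1 := by simp [stmtL, show (t+1) % 6 = 3 from by omega]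
          have hH' : stmtH (t+1) = 0 := by simp [stmtH, show (t+1) % 6 = 3 from by omega]
          rw [hL] at hlo; rw [hH] at hhi
          first
          | (rw [hL']
             show (stmtA t).mulVec (stmtX t) 1 ≤ stmtC (t+1)
             rw [hmv.2.1]; linarith)
          | (rw [hH']
             show 1 - stmtC (t+1) ≤ (stmtA t).mulVec (stmtX t) 0
             rw [hmv.1]
             have := stmt_step_high (stmtTh t) (stmtC t) (stmtC (t+1)) (stmtX t 2) (stmtX t 0)
               hθ0 hθ1 hc0 hc1 hrel hhi (hbox 0).1
             linarith)
        -- case t%6 = 3 : J32, L 1→2, H 0→0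
        · have hA := stmtA_eq32 t ht (by omega)
          have hmv := stmtJ32_mulVec (stmtTh t) (stmtX t)
          rw [← hA] at hmv
          have hL : stmtL t = 1 := by simp [stmtL, h6]
          have hH : stmtH t = 0 := by simp [stmtH, h6]
          have hL' : stmtL (t+1) = 2 := by simp [stmtL, show (t+1) % 6 = 4 from by omega]
          have hH' : stmtH (t+1) = 0 := by simp [stmtH, show (t+1) % 6 = 4 from by omega]
          rw [hL] at hlo; rw [hH] at hhi
          first
          | (rw [hL']
             show (stmtA t).mulVec (stmtX t) 2 ≤ stmtC (t+1)
             rw [hmv.2.2]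
             exact stmt_step_low _ _ _ _ _ hθ0 hθ1 hc0 hrel hlo (hbox 2).2)
          | (rw [hH']
             show 1 - stmtC (t+1) ≤ (stmtA t).mulVec (stmtX t) 0
             rw [hmv.1]; linarith)
        -- case t%6 = 4 : J21, L 2→2, H 0→1
        · have hA := stmtA_eq21 t ht (by omega)
          have hmv := stmtJ21_mulVec (stmtTh t) (stmtX t)
          rw [← hA] at hmv
          have hL : stmtL t = 2 := by simp [stmtL, h6]
          have hH : stmtH t = 0 := by simp [stmtH, h6]
          have hL' : stmtL (t+1) = 2 := by simp [stmtL, show (t+1) % 6 = 5 from by omega]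
          have hH' : stmtH (t+1) = 1 := by simp [stmtH, show (t+1) % 6 = 5 from by omega]
          rw [hL] at hlo; rw [hH] at hhi
          first
          | (rw [hL']
             show (stmtA t).mulVec (stmtX t) 2 ≤ stmtC (t+1)
             rw [hmv.2.2]; linarith)
          | (rw [hH']
             show 1 - stmtC (t+1) ≤ (stmtA t).mulVec (stmtX t) 1
             rw [hmv.2.1]
             exact stmt_step_high _ _ _ _ _ hθ0 hθ1 hc0 hc1 hrel hhi (hbox 1).1)
        -- case t%6 = 5 : J13, L 2→0, H 1→1
        · have hA := stmtA_eq13 t ht (by omega)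
          have hmv := stmtJ13_mulVec (stmtTh t) (stmtX t)
          rw [← hA] at hmv
          have hL : stmtL t = 2 := by simp [stmtL, h6]
          have hH : stmtH t = 1 := by simp [stmtH, h6]
          have hL' : stmtL (t+1) = 0 := by simp [stmtL, show (t+1) % 6 = 0 from by omega]
          have hH' : stmtH (t+1) = 1 := by simp [stmtH, show (t+1) % 6 = 0 from by omega]
          rw [hL] at hlo; rw [hH] at hhi
          first
          | (rw [hL']
             show (stmtA t).mulVec (stmtX t) 0 ≤ stmtC (t+1)
             rw [hmv.1]
             have := stmt_step_low (stmtTh t) (stmtC t) (stmtC (t+1)) (stmtX t 2) (stmtX t 0)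
               hθ0 hθ1 hc0 hrel hlo (hbox 0).2
             linarith)
          | (rw [hH']
             show 1 - stmtC (t+1) ≤ (stmtA t).mulVec (stmtX t) 1
             rw [hmv.2.1]; linarith) }
    · -- base case : t = 0
      have ht0 : t = 0 := by omega
      subst ht0
      have hx1 : stmtX 1 = ![0, 1/2, 1] := by
        show (stmtA 0).mulVec (stmtX 0) = _
        rw [show stmtA 0 = 1 from by unfold stmtA; rw [if_pos rfl], Matrix.one_mulVec]
        rfl
      rw [hx1]
      refine ⟨?_, ?_, ?_⟩
      · intro i; fin_cases i <;> norm_num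
      · show (![0, 1/2, 1] : Fin 3 → ℝ) (stmtL 1) ≤ stmtC 1
        unfold stmtL stmtC
        norm_num
      · show 1 - stmtC 1 ≤ (![0, 1/2, 1] : Fin 3 → ℝ) (stmtH 1)
        unfold stmtH stmtC
        norm_num [Matrix.cons_val_two]

/- ===================== sup/inf machinery ===================== -/

lemma stmt_sup_anti (t : ℕ) : (⨆ i, stmtX (t+1) i) ≤ ⨆ i, stmtX t i := by
  apply ciSup_le
  intro i
  have hrep : stmtX (t+1) i = ∑ j, stmtA t i j * stmtX t j := by
    show (stmtA t).mulVec (stmtX t) i = _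
    simp [Matrix.mulVec, dotProduct]
  rw [hrep]
  calc ∑ j, stmtA t i j * stmtX t j
      ≤ ∑ j, stmtA t i j * (⨆ k, stmtX t k) := by
        apply Finset.sum_le_sum
        intro j _
        exact mul_le_mul_of_nonneg_left
          (le_ciSup (Set.Finite.bddAbove (Set.finite_range _)) j) (stmtA_nonneg t i j)
    _ = (∑ j, stmtA t i j) * (⨆ k, stmtX t k) := by rw [Finset.sum_mul]
    _ = ⨆ k, stmtX t k := by rw [stmtA_rowsum t i, one_mul]

lemma stmt_inf_mono (t : ℕ) : (⨅ i, stmtX t i) ≤ ⨅ i, stmtX (t+1) i := by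
  apply le_ciInf
  intro i
  have hrep : stmtX (t+1) i = ∑ j, stmtA t i j * stmtX t j := by
    show (stmtA t).mulVec (stmtX t) i = _
    simp [Matrix.mulVec, dotProduct]
  rw [hrep]
  calc (⨅ k, stmtX t k) = (∑ j, stmtA t i j) * (⨅ k, stmtX t k) := by
        rw [stmtA_rowsum t i, one_mul]
    _ = ∑ j, stmtA t i j * (⨅ k, stmtX t k) := by rw [Finset.sum_mul]
    _ ≤ ∑ j, stmtA t i j * stmtX t j := by
        apply Finset.sum_le_sum
        intro j _
        exact mul_le_mul_of_nonneg_left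
          (ciInf_le (Set.Finite.bddBelow (Set.finite_range _)) j) (stmtA_nonneg t i j)

lemma stmt_psi_anti :
    Antitone (fun t => (⨆ i, stmtX t i) - (⨅ i, stmtX t i)) := by
  apply antitone_nat_of_succ_le
  intro t
  exact sub_le_sub (stmt_sup_anti t) (stmt_inf_mono t)

lemma stmt_psi_lb (t : ℕ) : 3/4 ≤ (⨆ i, stmtX t i) - (⨅ i, stmtX t i) := by
  have key : ∀ s, 1 ≤ s → 3/4 ≤ (⨆ i, stmtX s i) - (⨅ i, stmtX s i) := by
    intro s hs
    obtain ⟨hbox, hlo, hhi⟩ := stmt_inv s hs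
    have h1 : stmtX s (stmtH s) ≤ ⨆ i, stmtX s i :=
      le_ciSup (Set.Finite.bddAbove (Set.finite_range _)) _
    have h2 : (⨅ i, stmtX s i) ≤ stmtX s (stmtL s) :=
      ciInf_le (Set.Finite.bddBelow (Set.finite_range _)) _
    have h3 := stmtC_le s
    linarith
  cases t with
  | zero => exact le_trans (key 1 le_rfl) (stmt_psi_anti (by omega : (0:ℕ) ≤ 1))
  | succ t => exact key (t+1) (by omega)

/- ===================== persistence of all arcs ===================== -/

lemma stmt_arc_diverge (p q : Fin 3) (s : ℕ) (hs : s = 1 ∨ s = 2 ∨ s = 3)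
    (hgood : ∀ k : ℕ, 1/2 ≤ stmtA (3*k+s) q p) :
    Tendsto (fun n => ∑ t ∈ Icc 1 n, stmtA t q p) atTop atTop := by
  apply stmt_diverge _ (fun t _ => stmtA_nonneg t q p)
  intro k
  have n1 := stmtA_nonneg (3*k+1) q p
  have n2 := stmtA_nonneg (3*k+2) q p
  have n3 := stmtA_nonneg (3*k+3) q p
  rcases hs with rfl | rfl | rfl
  · linarith [hgood k]
  · linarith [hgood k]
  · linarith [hgood k]

lemma stmt_entry21 (k : ℕ) :
    stmtA (3*k+1) = stmtJ21 (stmtTh (3*k+1)) := stmtA_eq21 _ (by omega) (by omega)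
lemma stmt_entry13 (k : ℕ) :
    stmtA (3*k+2) = stmtJ13 (stmtTh (3*k+2)) := stmtA_eq13 _ (by omega) (by omega)
lemma stmt_entry32 (k : ℕ) :
    stmtA (3*k+3) = stmtJ32 (stmtTh (3*k+3)) := stmtA_eq32 _ (by omega) (by omega)

lemma stmt_persist :
    ∀ a b : Fin 3, Relation.ReflTransGen
      (fun p q : Fin 3 =>
        Tendsto (fun n => ∑ t ∈ Finset.Icc 1 n, stmtA t q p) atTop atTop) a b := by
  have arc01 : Tendsto (fun n => ∑ t ∈ Icc 1 n, stmtA t 1 0) atTop atTop := by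
    apply stmt_arc_diverge 0 1 1 (by norm_num)
    intro k
    rw [stmt_entry21 k]
    have := stmtTh_le (3*k+1)
    norm_num [stmtJ21, Matrix.vecHead, Matrix.vecTail]
    linarith
  have arc10 : Tendsto (fun n => ∑ t ∈ Icc 1 n, stmtA t 0 1) atTop atTop := by
    apply stmt_arc_diverge 1 0 1 (by norm_num)
    intro k
    rw [stmt_entry21 k]
    norm_num [stmtJ21, Matrix.vecHead, Matrix.vecTail]
  have arc02 : Tendsto (fun n => ∑ t ∈ Icc 1 n, stmtA t 2 0) atTop atTop := by
    apply stmt_arc_diverge 0 2 2 (by norm_num)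
    intro k
    rw [stmt_entry13 k]
    norm_num [stmtJ13, Matrix.vecHead, Matrix.vecTail, Matrix.cons_val_two]
  have arc20 : Tendsto (fun n => ∑ t ∈ Icc 1 n, stmtA t 0 2) atTop atTop := by
    apply stmt_arc_diverge 2 0 2 (by norm_num)
    intro k
    rw [stmt_entry13 k]
    have := stmtTh_le (3*k+2)
    norm_num [stmtJ13, Matrix.vecHead, Matrix.vecTail, Matrix.cons_val_two]
    linarith
  have arc12 : Tendsto (fun n => ∑ t ∈ Icc 1 n, stmtA t 2 1) atTop atTop := by
    apply stmt_arc_diverge 1 2 3 (by norm_num)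
    intro k
    rw [stmt_entry32 k]
    have := stmtTh_le (3*k+3)
    norm_num [stmtJ32, Matrix.vecHead, Matrix.vecTail, Matrix.cons_val_two]
    linarith
  have arc21 : Tendsto (fun n => ∑ t ∈ Icc 1 n, stmtA t 1 2) atTop atTop := by
    apply stmt_arc_diverge 2 1 3 (by norm_num)
    intro k
    rw [stmt_entry32 k]
    norm_num [stmtJ32, Matrix.vecHead, Matrix.vecTail, Matrix.cons_val_two]
  intro a b
  fin_cases a <;> fin_cases b
  · exact Relation.ReflTransGen.refl
  · exact Relation.ReflTransGen.single arc01
  · exact Relation.ReflTransGen.single arc02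
  · exact Relation.ReflTransGen.single arc10
  · exact Relation.ReflTransGen.refl
  · exact Relation.ReflTransGen.single arc12
  · exact Relation.ReflTransGen.single arc20
  · exact Relation.ReflTransGen.single arc21
  · exact Relation.ReflTransGen.refl

/- ===================== absolute infinite flow ===================== -/

lemma stmt_cut_nonneg (S : ℕ → Finset (Fin 3)) (t : ℕ) :
    0 ≤ (∑ i ∈ (S (t + 1))ᶜ, ∑ j ∈ S t, stmtA t i j) +
        ∑ i ∈ S (t + 1), ∑ j ∈ (S t)ᶜ, stmtA t i j := by
  have h1 : (0:ℝ) ≤ ∑ i ∈ (S (t + 1))ᶜ, ∑ j ∈ S t, stmtA t i j :=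
    Finset.sum_nonneg fun i _ => Finset.sum_nonneg fun j _ => stmtA_nonneg t i j
  have h2 : (0:ℝ) ≤ ∑ i ∈ S (t + 1), ∑ j ∈ (S t)ᶜ, stmtA t i j :=
    Finset.sum_nonneg fun i _ => Finset.sum_nonneg fun j _ => stmtA_nonneg t i j
  linarith

lemma stmt_aif (S : ℕ → Finset (Fin 3))
    (hS : ∀ t, 1 ≤ t → (S t).Nonempty ∧ S t ≠ Finset.univ) :
    Tendsto (fun n => ∑ t ∈ Finset.Icc 1 n,
      ((∑ i ∈ (S (t + 1))ᶜ, ∑ j ∈ S t, stmtA t i j) +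
        ∑ i ∈ S (t + 1), ∑ j ∈ (S t)ᶜ, stmtA t i j)) atTop atTop := by
  apply stmt_diverge _ (fun t _ => stmt_cut_nonneg S t)
  intro k
  have c1 := stmt_cut_nonneg S (3*k+1)
  have c2 := stmt_cut_nonneg S (3*k+2)
  have c3 := stmt_cut_nonneg S (3*k+3)
  have e12 : 3*k+1+1 = 3*k+2 := by omega
  have e23 : 3*k+2+1 = 3*k+3 := by omega
  have hS1 := hS (3*k+1) (by omega)
  have hS2 := hS (3*k+2) (by omega)
  have hS3 := hS (3*k+3) (by omega)
  have hd1 := stmtTh_pos (3*k+1)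
  have hd1' := stmtTh_le (3*k+1)
  have hd2 := stmtTh_pos (3*k+2)
  have hd2' := stmtTh_le (3*k+2)
  rcases stmt_dich21 (stmtTh (3*k+1)) hd1 hd1' (S (3*k+1)) (S (3*k+1+1))
      hS1.1 hS1.2 (by rw [e12]; exact hS2.1) (by rw [e12]; exact hS2.2) with ⟨hTS, hal⟩ | hpay
  · rcases stmt_dich13 (stmtTh (3*k+2)) hd2 hd2' (S (3*k+2)) (S (3*k+2+1))
        hS2.1 hS2.2 (by rw [e23]; exact hS3.1) (by rw [e23]; exact hS3.2) with ⟨hTS2, hal2⟩ | hpay2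
    · exfalso
      rw [e12] at hTS
      rcases hal with h | h <;> rcases hal2 with h' | h' <;>
        rw [hTS, h] at h' <;> exact absurd h' (by decide)
    · rw [← stmt_entry13 k] at hpay2
      linarith
  · rw [← stmt_entry21 k] at hpay
    linarith

/- ===================== the theorem ===================== -/

theorem stmt19 :
    ∃ (A : ℕ → Matrix (Fin 3) (Fin 3) ℝ) (x : ℕ → Fin 3 → ℝ),
      -- entrywise nonnegative, row-stochastic, strictly positive diagonal (for t ≥ 1)
      (∀ t, 1 ≤ t → ∀ i j, 0 ≤ A t i j) ∧
      (∀ t, 1 ≤ t → ∀ i, ∑ j, A t i j = 1) ∧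
      (∀ t, 1 ≤ t → ∀ i, 0 < A t i i) ∧
      -- cut-balance with constant K = 2
      (∀ t, 1 ≤ t → ∀ S : Finset (Fin 3), S.Nonempty → S ≠ Finset.univ →
        ∑ i ∈ Sᶜ, ∑ j ∈ S, A t i j ≤ 2 * ∑ i ∈ S, ∑ j ∈ Sᶜ, A t i j) ∧
      -- persistent graph strongly connected
      (∀ a b : Fin 3, Relation.ReflTransGen
        (fun p q : Fin 3 =>
          Tendsto (fun n => ∑ t ∈ Finset.Icc 1 n, A t q p) atTop atTop) a b) ∧
      -- absolute infinite flow property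
      (∀ S : ℕ → Finset (Fin 3),
        (∀ t, 1 ≤ t → (S t).Nonempty ∧ S t ≠ Finset.univ) →
        (∀ t, 1 ≤ t → (S t).card = (S 1).card) →
        Tendsto (fun n => ∑ t ∈ Finset.Icc 1 n,
          ((∑ i ∈ (S (t + 1))ᶜ, ∑ j ∈ S t, A t i j) +
            ∑ i ∈ S (t + 1), ∑ j ∈ (S t)ᶜ, A t i j)) atTop atTop) ∧
      -- dynamics
      (∀ t, 1 ≤ t → ∀ i, x (t + 1) i = ∑ j, A t i j * x t j) ∧
      -- failure of consensus: lim Ψ(t) > 0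
      (∃ c : ℝ, 0 < c ∧
        Tendsto (fun t => (⨆ i, x t i) - (⨅ i, x t i)) atTop (nhds c)) := by
  refine ⟨stmtA, stmtX, fun t _ i j => stmtA_nonneg t i j, fun t _ i => stmtA_rowsum t i,
    fun t ht i => stmtA_diag t ht i, fun t ht S h1 h2 => stmt_cb t ht S h1 h2,
    stmt_persist, fun S hS _ => stmt_aif S hS, ?_, ?_⟩
  · intro t _ i
    show (stmtA t).mulVec (stmtX t) i = _
    simp [Matrix.mulVec, dotProduct]
  · refine ⟨⨅ t, ((⨆ i, stmtX t i) - (⨅ i, stmtX t i)), ?_, ?_⟩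
    · have h := le_ciInf stmt_psi_lb
      linarith
    · exact tendsto_atTop_ciInf stmt_psi_anti
        ⟨3/4, by rintro y ⟨t, rfl⟩; exact stmt_psi_lb t⟩
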